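/- Let n ≥ 1, a, m ∈ ℝⁿ, ϱ = m − a, Φ(a) and M = Φ(m) their companion matrices, N = (0,…,0,1)ᵀ ∈ ℝⁿ, and let S ∈ Mₙ(ℝ) be the matrix whose i-th row equals ϱᵀ(Φ(a) + Iₙ)Φ(a)^{i−1}; assume S is invertible and set T = S⁻¹. Let u : ℝ → ℝ be n-times differentiable with u⁽ⁿ⁾(t) + a₁u(t) + a₂u′(t) + ⋯ + aₙu⁽ⁿ⁻¹⁾(t) = 0 for all t, set ξ(t) = (u(t), u′(t), …, u⁽ⁿ⁻¹⁾(t)) and θ(t) = T·ξ(t). Then for all t: θ′(t) = M·θ(t) + N·(ϱᵀθ(t)) and u(t) = ϱᵀ(Φ(a) + Iₙ)θ(t). -/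

import Mathlib

open Matrix

/-- The companion matrix `Φ(a)` of `a = (a₁, …, aₙ)`: superdiagonal entries `1`,
last row `(−a₁, …, −aₙ)`, all other entries `0`. -/
def companion {n : ℕ} (a : Fin n → ℝ) : Matrix (Fin n) (Fin n) ℝ :=
  Matrix.of fun i j =>
    if (i : ℕ) + 1 = n then -a j else if (j : ℕ) = (i : ℕ) + 1 then 1 else 0

namespace IMAux

variable {n : ℕ}

lemma single_vecMul (A : Matrix (Fin n) (Fin n) ℝ) (i : Fin n) :
    Pi.single i (1:ℝ) ᵥ* A = A i := by
  ext j
  simp [Matrix.vecMul, dotProduct, Pi.single_apply]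

lemma row_mul (A B : Matrix (Fin n) (Fin n) ℝ) (i : Fin n) :
    (A * B) i = A i ᵥ* B := by
  ext j
  simp [Matrix.mul_apply, Matrix.vecMul, dotProduct]

lemma vecMul_smulM (v : Fin n → ℝ) (c : ℝ) (A : Matrix (Fin n) (Fin n) ℝ) :
    v ᵥ* (c • A) = c • (v ᵥ* A) := by
  ext j
  simp [Matrix.vecMul, dotProduct, Finset.mul_sum, mul_left_comm]

lemma vecMul_sumM {ι : Type*} (s : Finset ι) (v : Fin n → ℝ)
    (f : ι → Matrix (Fin n) (Fin n) ℝ) :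
    v ᵥ* (∑ k ∈ s, f k) = ∑ k ∈ s, v ᵥ* f k := by
  ext j
  simp [Matrix.vecMul, dotProduct, Matrix.sum_apply, Finset.mul_sum]
  rw [Finset.sum_comm]

lemma e0_pow (a : Fin n → ℝ) (k : ℕ) (hk : k < n) :
    Pi.single (⟨0, Nat.lt_of_le_of_lt (Nat.zero_le _) hk⟩ : Fin n) (1:ℝ) ᵥ* (companion a) ^ k
      = Pi.single ⟨k, hk⟩ 1 := by
  induction k with
  | zero => simp
  | succ k ih =>
    have hk' : k < n := Nat.lt_of_succ_lt hk
    rw [pow_succ, ← Matrix.vecMul_vecMul, ih hk', single_vecMul]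
    ext j
    simp only [companion, Matrix.of_apply, Pi.single_apply]
    have : ¬ ((k : ℕ) + 1 = n) := Nat.ne_of_lt hk
    rw [if_neg this]
    by_cases h : (j : ℕ) = k + 1
    · rw [if_pos h, if_pos (by exact Fin.ext h)]
    · rw [if_neg h, if_neg (by intro hh; exact h (by rw [hh])), ]

lemma companion_CH (a : Fin n → ℝ) (hn : 1 ≤ n) :
    (companion a) ^ n + ∑ k : Fin n, a k • (companion a) ^ (k : ℕ) = 0 := by
  set Φ := companion a with hΦ
  set X := Φ ^ n + ∑ k : Fin n, a k • Φ ^ (k : ℕ) with hX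
  have h0 : (0:ℕ) < n := hn
  have hlast : n - 1 < n := Nat.sub_lt h0 one_pos
  -- row 0 of X is zero
  have hrow0 : Pi.single (⟨0, h0⟩ : Fin n) (1:ℝ) ᵥ* X = 0 := by
    have hpn : Φ ^ n = Φ ^ (n-1) * Φ := by
      rw [← pow_succ, Nat.sub_add_cancel hn]
    rw [hX, Matrix.vecMul_add, hpn, ← Matrix.vecMul_vecMul, e0_pow a (n-1) hlast,
      single_vecMul, vecMul_sumM]
    ext j
    have h1 : Φ ⟨n-1, hlast⟩ j = -a j := by
      simp [hΦ, companion, Nat.sub_add_cancel hn]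
    have h2 : ∀ k : Fin n, (Pi.single (⟨0, h0⟩ : Fin n) (1:ℝ) ᵥ* (a k • Φ ^ (k:ℕ))) j
        = a k * (Pi.single k (1:ℝ) : Fin n → ℝ) j := by
      intro k
      rw [vecMul_smulM]
      have := e0_pow a (k:ℕ) k.2
      rw [show (⟨(k:ℕ), k.2⟩ : Fin n) = k from Fin.eta k k.2] at this
      rw [this]
      simp
    simp only [Pi.add_apply, Finset.sum_apply, h1, h2, Pi.zero_apply]
    rw [Finset.sum_congr rfl (fun k _ => rfl)]
    simp [Pi.single_apply]
  -- X commutes with powers of Φ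
  have hcomm : ∀ i : ℕ, Φ ^ i * X = X * Φ ^ i := by
    intro i
    have c1 : Commute (Φ ^ i) (Φ ^ n) := (Commute.refl Φ).pow_pow i n
    have c2 : Commute (Φ ^ i) (∑ k : Fin n, a k • Φ ^ (k:ℕ)) := by
      apply Commute.sum_right
      intro k _
      exact ((Commute.refl Φ).pow_pow i (k:ℕ)).smul_right (a k)
    exact (c1.add_right c2)
  ext i j
  have hei : Pi.single i (1:ℝ) = Pi.single (⟨0, h0⟩ : Fin n) (1:ℝ) ᵥ* Φ ^ (i:ℕ) := by
    rw [e0_pow a (i:ℕ) i.2, Fin.eta]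
  have : X i j = (Pi.single i (1:ℝ) ᵥ* X) j := by rw [single_vecMul]
  rw [this, hei, Matrix.vecMul_vecMul, hcomm, ← Matrix.vecMul_vecMul, hrow0]
  simp [Matrix.vecMul]


lemma vecMul_eq_sum' (v : Fin n → ℝ) (A : Matrix (Fin n) (Fin n) ℝ) :
    v ᵥ* A = ∑ k : Fin n, v k • A k := by
  ext j
  simp [Matrix.vecMul, dotProduct, Finset.sum_apply]

lemma companion_row_last (a : Fin n → ℝ) (i : Fin n) (hi : (i : ℕ) + 1 = n) :
    companion a i = -a := by
  funext k; simp [companion, hi]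

lemma companion_row_succ (a : Fin n → ℝ) (i : Fin n) (hlt : (i : ℕ) + 1 < n) :
    companion a i = Pi.single (⟨(i : ℕ) + 1, hlt⟩ : Fin n) (1 : ℝ) := by
  funext k
  simp only [companion, Matrix.of_apply, Pi.single_apply]
  rw [if_neg (Nat.ne_of_lt hlt)]
  by_cases h : (k : ℕ) = (i : ℕ) + 1
  · rw [if_pos h, if_pos (Fin.ext h)]
  · rw [if_neg h, if_neg (fun hh => h (by rw [hh]))]

lemma comm_S (a ϱ : Fin n → ℝ) (hn : 1 ≤ n) :
    companion a *
      (Matrix.of fun (i j : Fin n) =>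
        Matrix.vecMul ϱ ((companion a + 1) * companion a ^ (i : ℕ)) j)
    = (Matrix.of fun (i j : Fin n) =>
        Matrix.vecMul ϱ ((companion a + 1) * companion a ^ (i : ℕ)) j) * companion a := by
  set Φ := companion a with hΦ
  set S : Matrix (Fin n) (Fin n) ℝ :=
    Matrix.of (fun (i j : Fin n) => Matrix.vecMul ϱ ((Φ + 1) * Φ ^ (i : ℕ)) j) with hS
  have hSi : ∀ i : Fin n, S i = ϱ ᵥ* ((Φ + 1) * Φ ^ (i : ℕ)) := fun i => rfl
  have hCH : (Φ + 1) * Φ ^ n = ∑ k : Fin n, (-(a k)) • ((Φ + 1) * Φ ^ (k : ℕ)) := by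
    have h := companion_CH a hn
    have h2 : Φ ^ n = -∑ k : Fin n, a k • Φ ^ (k : ℕ) := eq_neg_of_add_eq_zero_left h
    rw [h2, mul_neg, Finset.mul_sum, ← Finset.sum_neg_distrib]
    refine Finset.sum_congr rfl fun k _ => ?_
    rw [Matrix.mul_smul, neg_smul]
  have hrows : ∀ i : Fin n, (Φ * S) i = (S * Φ) i := by
    intro i
    have hR : (S * Φ) i = ϱ ᵥ* ((Φ + 1) * Φ ^ ((i : ℕ) + 1)) := by
      rw [row_mul, hSi, Matrix.vecMul_vecMul, mul_assoc, ← pow_succ]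
    rw [row_mul, hR]
    by_cases hi : (i : ℕ) + 1 = n
    · have hrow : Φ i = -a := by
        funext k
        simp [hΦ, companion, hi]
      rw [hrow, Matrix.neg_vecMul, vecMul_eq_sum', hi, hCH, vecMul_sumM,
        ← Finset.sum_neg_distrib]
      refine Finset.sum_congr rfl fun k _ => ?_
      rw [vecMul_smulM, hSi, neg_smul, ← smul_neg]
    · have hlt : (i : ℕ) + 1 < n := lt_of_le_of_ne i.2 hi
      have hrow : Φ i = Pi.single (⟨(i : ℕ) + 1, hlt⟩ : Fin n) (1 : ℝ) := by
        funext k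
        simp only [hΦ, companion, Matrix.of_apply, Pi.single_apply]
        rw [if_neg hi]
        by_cases h : (k : ℕ) = (i : ℕ) + 1
        · rw [if_pos h, if_pos (Fin.ext h)]
        · rw [if_neg h, if_neg (fun hh => h (by rw [hh]))]
      rw [hrow, single_vecMul, hSi]
  ext i j
  exact congrFun (hrows i) j

end IMAux

/-- the nonlinear internal model identity: after the coordinate change
`θ = T·ξ` with `T = S⁻¹`, the steady-state generator satisfies
`θ′ = Mθ + N(ϱᵀθ)` and `u = ϱᵀ(Φ(a) + Iₙ)θ`. -/
theorem internal_model_identity {n : ℕ} (hn : 1 ≤ n) (a m ϱ : Fin n → ℝ)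
    (hϱ : ϱ = m - a)
    (M : Matrix (Fin n) (Fin n) ℝ) (hM : M = companion m)
    (N : Fin n → ℝ) (hN : N = fun (i : Fin n) => if (i : ℕ) + 1 = n then (1 : ℝ) else 0)
    (S : Matrix (Fin n) (Fin n) ℝ)
    (hS : S = Matrix.of fun (i j : Fin n) =>
      Matrix.vecMul ϱ ((companion a + 1) * companion a ^ (i : ℕ)) j)
    (hSinv : IsUnit S.det)
    (T : Matrix (Fin n) (Fin n) ℝ) (hT : T = S⁻¹)
    (u : ℝ → ℝ)
    (hdiff : ∀ i < n, Differentiable ℝ (iteratedDeriv i u))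
    (hode : ∀ t : ℝ, iteratedDeriv n u t + ∑ i : Fin n, a i * iteratedDeriv i u t = 0)
    (ξ : ℝ → (Fin n → ℝ)) (hξ : ξ = fun t => fun i : Fin n => iteratedDeriv i u t)
    (θ : ℝ → (Fin n → ℝ)) (hθ : θ = fun t => T.mulVec (ξ t)) :
    (∀ t : ℝ, HasDerivAt θ (M.mulVec (θ t) + (ϱ ⬝ᵥ θ t) • N) t) ∧
      (∀ t : ℝ, u t = ϱ ⬝ᵥ (companion a + 1).mulVec (θ t)) := by
  have h0 : 0 < n := hn
  set Φ := companion a with hΦ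
  have hθt : ∀ t, θ t = T.mulVec (ξ t) := fun t => by rw [hθ]
  have hcomm : Φ * S = S * Φ := by rw [hS]; exact IMAux.comm_S a ϱ hn
  have hST : S * T = 1 := by rw [hT]; exact Matrix.mul_nonsing_inv S hSinv
  have hTS : T * S = 1 := by rw [hT]; exact Matrix.nonsing_inv_mul S hSinv
  have hTΦ : T * Φ = Φ * T := by
    calc T * Φ = T * Φ * (S * T) := by rw [hST, mul_one]
    _ = T * (Φ * S) * T := by simp only [mul_assoc]
    _ = T * S * Φ * T := by rw [hcomm]; simp only [mul_assoc]
    _ = Φ * T := by rw [hTS, one_mul]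
  -- derivative of ξ
  have hξd : ∀ t, HasDerivAt ξ (Φ.mulVec (ξ t)) t := by
    intro t
    rw [hasDerivAt_pi]
    intro i
    have h1 : HasDerivAt (fun s => ξ s i) (iteratedDeriv ((i : ℕ) + 1) u t) t := by
      rw [hξ]
      simpa [← iteratedDeriv_succ] using
        ((hdiff i i.2).differentiableAt (x := t)).hasDerivAt
    refine h1.congr_deriv (Eq.symm ?_)
    show Φ i ⬝ᵥ ξ t = _
    by_cases hi : (i : ℕ) + 1 = n
    · have hrow : Φ i = -a := by rw [hΦ]; exact IMAux.companion_row_last a i hi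
      rw [hrow, hi]
      simp only [hξ]
      have h3 : (-a) ⬝ᵥ (fun j : Fin n => iteratedDeriv (j : ℕ) u t)
          = -∑ j : Fin n, a j * iteratedDeriv (j : ℕ) u t := by
        simp [dotProduct]
      rw [h3]
      linarith [hode t]
    · have hlt : (i : ℕ) + 1 < n := lt_of_le_of_ne i.2 hi
      have hrow : Φ i = Pi.single (⟨(i : ℕ) + 1, hlt⟩ : Fin n) (1 : ℝ) := by
        rw [hΦ]; exact IMAux.companion_row_succ a i hlt
      rw [hrow]
      simp only [hξ]
      simp [dotProduct, Pi.single_apply]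
  -- derivative of θ
  have hθd : ∀ t, HasDerivAt θ (T.mulVec (Φ.mulVec (ξ t))) t := by
    intro t
    rw [hθ, hasDerivAt_pi]
    intro i
    have h := hξd t
    rw [hasDerivAt_pi] at h
    have h2 : HasDerivAt (fun s => ∑ j, T i j * ξ s j)
        (∑ j, T i j * (Φ.mulVec (ξ t)) j) t :=
      HasDerivAt.fun_sum fun j _ => (h j).const_mul (T i j)
    simpa [Matrix.mulVec, dotProduct] using h2
  -- the algebraic identity
  have key : ∀ x : Fin n → ℝ,
      T.mulVec (Φ.mulVec x) = M.mulVec (T.mulVec x) + (ϱ ⬝ᵥ T.mulVec x) • N := by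
    intro x
    rw [Matrix.mulVec_mulVec, hTΦ, ← Matrix.mulVec_mulVec]
    set y := T.mulVec x with hy
    ext i
    rw [Pi.add_apply, Pi.smul_apply]
    by_cases hi : (i : ℕ) + 1 = n
    · have h1 : (Φ *ᵥ y) i = (-a) ⬝ᵥ y := by
        show Φ i ⬝ᵥ y = _
        rw [show Φ i = -a by rw [hΦ]; exact IMAux.companion_row_last a i hi]
      have h2 : (M *ᵥ y) i = (-m) ⬝ᵥ y := by
        show M i ⬝ᵥ y = _
        rw [show M i = -m by rw [hM]; exact IMAux.companion_row_last m i hi]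
      have h3 : N i = 1 := by rw [hN]; simp [hi]
      rw [h1, h2, h3, hϱ, smul_eq_mul, mul_one,
        neg_dotProduct, neg_dotProduct, sub_dotProduct]
      ring
    · have hlt : (i : ℕ) + 1 < n := lt_of_le_of_ne i.2 hi
      have h1 : (Φ *ᵥ y) i = y ⟨(i : ℕ) + 1, hlt⟩ := by
        show Φ i ⬝ᵥ y = _
        rw [show Φ i = Pi.single (⟨(i : ℕ) + 1, hlt⟩ : Fin n) (1 : ℝ) by
          rw [hΦ]; exact IMAux.companion_row_succ a i hlt]
        simp [dotProduct, Pi.single_apply]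
      have h2 : (M *ᵥ y) i = y ⟨(i : ℕ) + 1, hlt⟩ := by
        show M i ⬝ᵥ y = _
        rw [show M i = Pi.single (⟨(i : ℕ) + 1, hlt⟩ : Fin n) (1 : ℝ) by
          rw [hM]; exact IMAux.companion_row_succ m i hlt]
        simp [dotProduct, Pi.single_apply]
      have h3 : N i = 0 := by rw [hN]; simp [hi]
      rw [h1, h2, h3, smul_zero, add_zero]
  refine ⟨fun t => ?_, fun t => ?_⟩
  · have h := hθd t
    rw [key (ξ t), ← hθt t] at h
    exact h
  · rw [hθt t, Matrix.dotProduct_mulVec, Matrix.dotProduct_mulVec,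
      Matrix.vecMul_vecMul]
    have hrow0 : ϱ ᵥ* (Φ + 1) = S ⟨0, h0⟩ := by
      rw [hS]
      show ϱ ᵥ* (Φ + 1) = ϱ ᵥ* ((Φ + 1) * Φ ^ ((0 : ℕ)))
      rw [pow_zero, mul_one]
    rw [show ϱ ᵥ* ((Φ + 1) * T) = (ϱ ᵥ* (Φ + 1)) ᵥ* T from
        (Matrix.vecMul_vecMul _ _ _).symm,
      hrow0, ← IMAux.row_mul, hST]
    have hone : (1 : Matrix (Fin n) (Fin n) ℝ) ⟨0, h0⟩
        = Pi.single (⟨0, h0⟩ : Fin n) (1 : ℝ) := by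
      funext j
      rw [Matrix.one_apply, Pi.single_apply]
      by_cases h : (⟨0, h0⟩ : Fin n) = j
      · rw [if_pos h, if_pos h.symm]
      · rw [if_neg h, if_neg (Ne.symm h)]
    rw [hone, hξ]
    simp [dotProduct, Pi.single_apply]
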